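/- If γ ∈ (ℕ ∪ {−1})^N does not belong to C_g, then the subcomplex K_{g,γ}^• of the twisted complex is acyclic: its cohomology vanishes in every degree m ≥ 0. -/

import Mathlib

set_option synthInstance.maxHeartbeats 1000000
set_option maxHeartbeats 1000000

attribute [local instance] Classical.propDecidable

noncomputable section

open scoped TensorProduct

section QSA
variable (k : Type) [Field k] (N : ℕ) (q : Fin N → Fin N → k)

/-- The commutation relations of the quantum symmetric algebra. -/
inductive QRel : FreeAlgebra k (Fin N) → FreeAlgebra k (Fin N) → Prop
  | rel (i j : Fin N) : QRel (FreeAlgebra.ι k i * FreeAlgebra.ι k j)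
      (q i j • (FreeAlgebra.ι k j * FreeAlgebra.ι k i))

/-- The quantum symmetric algebra `A = S_q(V)`. -/
abbrev QSA := RingQuot (QRel k N q)

/-- The generator `x_i` of `S_q(V)`. -/
def X (i : Fin N) : QSA k N q := RingQuot.mkAlgHom k (QRel k N q) (FreeAlgebra.ι k i)

/-- The ordered monomial `x^α = x_1^{α_1} ⋯ x_N^{α_N}`. -/
def xpow (α : Fin N → ℕ) : QSA k N q := (List.ofFn fun i => X k N q i ^ α i).prod

end QSA

section Twisted
variable (k : Type) [Field k] (N : ℕ) (q : Fin N → Fin N → k) (lam : Fin N → k)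

/-- The total space `A ⊗ ∧(V^*)` of the twisted cochain complex, in the `k`-basis
`(x*)^{∧β}` of `∧(V^*)` indexed by subsets `β ⊆ {1,…,N}`: an element is a finitely
supported family of coefficients in `A`. -/
abbrev TwCochain := Finset (Fin N) →₀ QSA k N q

/-- The differential of the twisted complex,
`d*(x^α ⊗ (x*)^{∧β}) = Σ_{i : β_i = 0} (-1)^{β_1+⋯+β_i}
  [(∏_{s≤i} q_{s,i}^{β_s}) x_i x^α - λ_i (∏_{s≥i} q_{i,s}^{β_s}) x^α x_i] ⊗ (x*)^{∧(β+[i])}`. -/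
def dtw : TwCochain k N q →ₗ[k] TwCochain k N q :=
  Finsupp.lsum k fun S : Finset (Fin N) =>
    ∑ i ∈ Sᶜ,
      (Finsupp.lsingle (insert i S)).comp
        (((-1 : k) ^ (S.filter (fun s => s < i)).card) •
          ((∏ s ∈ S.filter (fun s => s ≤ i), q s i) • LinearMap.mulLeft k (X k N q i)
            - (lam i * ∏ s ∈ S.filter (fun s => i ≤ s), q i s) •
                LinearMap.mulRight k (X k N q i)))

/-- `ε(β,i) = (-1)^{β_1 + ⋯ + β_i}`. -/
def eps (β : Fin N → ℤ) (i : Fin N) : k :=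
  (-1 : k) ^ (∑ s ∈ Finset.univ.filter (fun s => s ≤ i), β s)

/-- The scalar `Ω_g(α, β, i)` of the paper. -/
def Omega (α β : Fin N → ℤ) (i : Fin N) : k :=
  if (∏ s, q i s ^ (α s - β s)) = lam i then 0
  else if β i ≠ 0 then 0
  else
    eps k N β i *
      ((∏ s ∈ Finset.univ.filter (fun s => s ≤ i), q i s ^ (α s - β s))
        - lam i * (∏ s ∈ Finset.univ.filter (fun s => i ≤ s), q s i ^ (α s - β s)))

/-- A subset `β ⊆ {1,…,N}`, considered as a `{0,1}`-vector in `ℤ^N`. -/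
def betaZ (S : Finset (Fin N)) : Fin N → ℤ := fun s => if s ∈ S then 1 else 0

/-- `K_{g,γ}^m`: the span of the basis elements `x^α ⊗ (x*)^{∧β}` with `|β| = m` and
`α - β = γ`, a subspace of the degree-`m` term of the twisted complex. -/
def KspanM (γ : Fin N → ℤ) (m : ℕ) : Submodule k (TwCochain k N q) :=
  Submodule.span k {f | ∃ (α : Fin N → ℕ) (S : Finset (Fin N)), S.card = m ∧
    (fun s => (α s : ℤ)) - betaZ N S = γ ∧ f = Finsupp.single S (xpow k N q α)}

/-- The set `C_g = {γ ∈ (ℕ ∪ {-1})^N : for each i, ∏_s q_{i,s}^{γ_s} = λ_i or γ_i = -1}`. -/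
def Cg : Set (Fin N → ℤ) :=
  {γ | ∀ i : Fin N, (∏ s, q i s ^ γ s) = lam i ∨ γ i = -1}

end Twisted


section ProofAux
open Finset

variable {k : Type} [Field k] {N : ℕ}

section Lists
variable {A : Type} [Ring A] [Algebra k A]

private lemma list_left_comm (y : A) : ∀ (n : ℕ) (f : Fin n → A) (c : Fin n → k),
    (∀ j, y * f j = c j • (f j * y)) →
    y * (List.ofFn f).prod = (∏ j, c j) • ((List.ofFn f).prod * y)
  | 0, f, c, h => by simp
  | n+1, f, c, h => by
    have ih := list_left_comm y n (fun j => f j.succ) (fun j => c j.succ) (fun j => h j.succ)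
    calc y * (List.ofFn f).prod
        = (y * f 0) * (List.ofFn fun j => f j.succ).prod := by
          rw [List.ofFn_succ, List.prod_cons, ← mul_assoc]
      _ = c 0 • (f 0 * (y * (List.ofFn fun j => f j.succ).prod)) := by
          rw [h 0, smul_mul_assoc, mul_assoc]
      _ = c 0 • (f 0 * ((∏ j : Fin n, c j.succ) • ((List.ofFn fun j => f j.succ).prod * y))) := by
          rw [ih]
      _ = (∏ j : Fin (n+1), c j) • ((List.ofFn f).prod * y) := by
          rw [mul_smul_comm, smul_smul, Fin.prod_univ_succ, List.ofFn_succ, List.prod_cons,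
            mul_assoc]

private lemma list_right_comm (y : A) : ∀ (n : ℕ) (f : Fin n → A) (c : Fin n → k),
    (∀ j, f j * y = c j • (y * f j)) →
    (List.ofFn f).prod * y = (∏ j, c j) • (y * (List.ofFn f).prod)
  | 0, f, c, h => by simp
  | n+1, f, c, h => by
    have ih := list_right_comm y n (fun j => f j.succ) (fun j => c j.succ) (fun j => h j.succ)
    calc (List.ofFn f).prod * y
        = f 0 * ((List.ofFn fun j => f j.succ).prod * y) := by
          rw [List.ofFn_succ, List.prod_cons, mul_assoc]
      _ = (∏ j : Fin n, c j.succ) • ((f 0 * y) * (List.ofFn fun j => f j.succ).prod) := by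
          rw [ih, mul_smul_comm, ← mul_assoc]
      _ = (∏ j : Fin n, c j.succ) • (c 0 • ((y * f 0) * (List.ofFn fun j => f j.succ).prod)) := by
          rw [h 0, smul_mul_assoc]
      _ = (∏ j : Fin (n+1), c j) • (y * (List.ofFn f).prod) := by
          rw [smul_smul, Fin.prod_univ_succ, mul_comm (c 0), List.ofFn_succ, List.prod_cons,
            mul_assoc]

private lemma list_insert_right (y : A) : ∀ (n : ℕ) (f : Fin n → A) (c : Fin n → k) (i : Fin n),
    (∀ j, i < j → f j * y = c j • (y * f j)) →
    (List.ofFn f).prod * y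
      = (∏ j ∈ Finset.univ.filter (fun j => i < j), c j) •
          (List.ofFn (Function.update f i (f i * y))).prod
  | 0, _, _, i, _ => i.elim0
  | n+1, f, c, i, h => by
    induction i using Fin.cases with
    | zero =>
      have hupd : List.ofFn (Function.update f 0 (f 0 * y))
          = (f 0 * y) :: List.ofFn (fun j : Fin n => f j.succ) := by
        rw [List.ofFn_succ]
        exact congrArg₂ List.cons (Function.update_self 0 (f 0 * y) f)
          (congrArg List.ofFn
            (funext fun j => Function.update_of_ne (Fin.succ_ne_zero j) _ f))
      have hprod : (∏ j ∈ Finset.univ.filter (fun j : Fin (n+1) => 0 < j), c j)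
          = ∏ j : Fin n, c j.succ := by
        rw [Finset.prod_filter, Fin.prod_univ_succ]
        simp [Fin.succ_pos]
      calc (List.ofFn f).prod * y
          = f 0 * ((List.ofFn fun j => f j.succ).prod * y) := by
            rw [List.ofFn_succ, List.prod_cons, mul_assoc]
        _ = f 0 * ((∏ j : Fin n, c j.succ) • (y * (List.ofFn fun j => f j.succ).prod)) := by
            rw [list_right_comm y n _ _ (fun j => h j.succ (Fin.succ_pos j))]
        _ = (∏ j : Fin n, c j.succ) • ((f 0 * y) * (List.ofFn fun j => f j.succ).prod) := by
            rw [mul_smul_comm, ← mul_assoc]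
        _ = _ := by rw [hupd, List.prod_cons, hprod]
    | succ i' =>
      have ih := list_insert_right y n (fun j => f j.succ) (fun j => c j.succ) i'
        (fun j hj => h j.succ (Fin.succ_lt_succ_iff.mpr hj))
      have hupd : List.ofFn (Function.update f i'.succ (f i'.succ * y))
          = f 0 :: List.ofFn (Function.update (fun j : Fin n => f j.succ) i'
              (f i'.succ * y)) := by
        rw [List.ofFn_succ]
        exact congrArg₂ List.cons (Function.update_of_ne (Fin.succ_ne_zero i').symm _ f)
          (congrArg List.ofFn (funext fun j => by
            simp [Function.update_apply, Fin.succ_inj]))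
      have hprod : (∏ j ∈ Finset.univ.filter (fun j : Fin (n+1) => i'.succ < j), c j)
          = ∏ j ∈ Finset.univ.filter (fun j : Fin n => i' < j), c j.succ := by
        rw [Finset.prod_filter, Finset.prod_filter, Fin.prod_univ_succ]
        simp [Fin.succ_lt_succ_iff]
      calc (List.ofFn f).prod * y
          = f 0 * ((List.ofFn fun j => f j.succ).prod * y) := by
            rw [List.ofFn_succ, List.prod_cons, mul_assoc]
        _ = f 0 * ((∏ j ∈ Finset.univ.filter (fun j : Fin n => i' < j), c j.succ) •
              (List.ofFn (Function.update (fun j : Fin n => f j.succ) i'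
                (f i'.succ * y))).prod) := by rw [ih]
        _ = _ := by
            rw [mul_smul_comm, hupd, List.prod_cons, hprod]

end Lists

variable (q : Fin N → Fin N → k)

private lemma Xcomm (i j : Fin N) :
    X k N q i * X k N q j = q i j • (X k N q j * X k N q i) := by
  have h := RingQuot.mkAlgHom_rel k (QRel.rel (q := q) i j)
  simpa only [X, map_mul, map_smul] using h

private lemma Xcomm_pow (i j : Fin N) (n : ℕ) :
    X k N q i * X k N q j ^ n = (q i j ^ n) • (X k N q j ^ n * X k N q i) := by
  induction n with
  | zero => simp
  | succ n ih =>
    calc X k N q i * X k N q j ^ (n+1)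
        = (X k N q i * X k N q j) * X k N q j ^ n := by rw [pow_succ', mul_assoc]
      _ = q i j • (X k N q j * (X k N q i * X k N q j ^ n)) := by
          rw [Xcomm, smul_mul_assoc, mul_assoc]
      _ = q i j • (X k N q j * ((q i j ^ n) • (X k N q j ^ n * X k N q i))) := by rw [ih]
      _ = (q i j ^ (n+1)) • (X k N q j ^ (n+1) * X k N q i) := by
          rw [mul_smul_comm, smul_smul, ← mul_assoc, ← pow_succ', ← pow_succ']

private lemma Xcomm_pow' (i j : Fin N) (n : ℕ) :
    X k N q i ^ n * X k N q j = (q i j ^ n) • (X k N q j * X k N q i ^ n) := by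
  induction n with
  | zero => simp
  | succ n ih =>
    calc X k N q i ^ (n+1) * X k N q j
        = X k N q i ^ n * (X k N q i * X k N q j) := by rw [pow_succ, mul_assoc]
      _ = q i j • ((X k N q i ^ n * X k N q j) * X k N q i) := by
          rw [Xcomm, mul_smul_comm, mul_assoc]
      _ = q i j • ((q i j ^ n) • ((X k N q j * X k N q i ^ n) * X k N q i)) := by
          rw [ih, smul_mul_assoc]
      _ = (q i j ^ (n+1)) • (X k N q j * X k N q i ^ (n+1)) := by
          rw [smul_smul, ← pow_succ', mul_assoc, ← pow_succ]

private def nsucc (α : Fin N → ℕ) (i : Fin N) : Fin N → ℕ :=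
  fun j => α j + if j = i then 1 else 0

private lemma xpow_mul_X (α : Fin N → ℕ) (i : Fin N) :
    xpow k N q α * X k N q i
      = (∏ j ∈ Finset.univ.filter (fun j => i < j), q j i ^ α j) •
          xpow k N q (nsucc α i) := by
  have hupd : Function.update (fun j => X k N q j ^ α j) i (X k N q i ^ α i * X k N q i)
      = fun j => X k N q j ^ (nsucc α i j) := by
    funext j
    rcases eq_or_ne j i with rfl | hj
    · simp [nsucc, pow_succ]
    · simp [Function.update_of_ne hj, nsucc, hj]
  unfold xpow
  rw [list_insert_right (X k N q i) N (fun j => X k N q j ^ α j) (fun j => q j i ^ α j) i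
    (fun j _ => Xcomm_pow' q j i (α j)), hupd]

private lemma X_mul_xpow (α : Fin N → ℕ) (i : Fin N) :
    X k N q i * xpow k N q α
      = ((∏ j, q i j ^ α j) * ∏ j ∈ Finset.univ.filter (fun j => i < j), q j i ^ α j) •
          xpow k N q (nsucc α i) := by
  have h1 : X k N q i * xpow k N q α = (∏ j, q i j ^ α j) • (xpow k N q α * X k N q i) := by
    unfold xpow
    exact list_left_comm (X k N q i) N (fun j => X k N q j ^ α j) (fun j => q i j ^ α j)
      (fun j => Xcomm_pow q i j (α j))
  rw [h1, xpow_mul_X, smul_smul]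

end ProofAux
section Rep
open Finset

variable {k : Type} [Field k] {N : ℕ} (q : Fin N → Fin N → k)

private def Trep (i : Fin N) : ((Fin N → ℕ) →₀ k) →ₗ[k] ((Fin N → ℕ) →₀ k) :=
  Finsupp.lsum k fun μ : Fin N → ℕ =>
    (∏ s ∈ Finset.univ.filter (fun s => s < i), q i s ^ μ s) • Finsupp.lsingle (nsucc μ i)

private lemma Trep_single (i : Fin N) (μ : Fin N → ℕ) (b : k) :
    Trep q i (Finsupp.single μ b)
      = (∏ s ∈ Finset.univ.filter (fun s => s < i), q i s ^ μ s) •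
          Finsupp.single (nsucc μ i) b := by
  unfold Trep
  rw [Finsupp.lsum_single, LinearMap.smul_apply, Finsupp.lsingle_apply]

private lemma prod_nsucc (i j : Fin N) (μ : Fin N → ℕ) :
    (∏ s ∈ Finset.univ.filter (fun s => s < i), q i s ^ (nsucc μ j s))
      = (∏ s ∈ Finset.univ.filter (fun s => s < i), q i s ^ μ s)
          * (if j < i then q i j else 1) := by
  have h1 : ∀ s ∈ Finset.univ.filter (fun s => s < i),
      q i s ^ (nsucc μ j s) = q i s ^ μ s * (if s = j then q i s else 1) := by
    intro s _
    rcases eq_or_ne s j with rfl | hs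
    · simp [nsucc, pow_add]
    · simp [nsucc, hs]
  rw [Finset.prod_congr rfl h1, Finset.prod_mul_distrib, Finset.prod_ite_eq']
  simp

private lemma Trep_rel (hq0 : ∀ i j, q i j ≠ 0) (hq1 : ∀ i, q i i = 1)
    (hqinv : ∀ i j, q j i = (q i j)⁻¹) (i j : Fin N) :
    (Trep q i) ∘ₗ (Trep q j) = q i j • ((Trep q j) ∘ₗ (Trep q i)) := by
  apply Finsupp.lhom_ext
  intro μ b
  rw [LinearMap.comp_apply, LinearMap.smul_apply, LinearMap.comp_apply,
    Trep_single, map_smul, Trep_single, Trep_single, map_smul, Trep_single,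
    smul_smul, smul_smul, smul_smul]
  have hν : nsucc (nsucc μ j) i = nsucc (nsucc μ i) j := by
    funext l
    simp only [nsucc]
    omega
  rw [hν, prod_nsucc, prod_nsucc]
  congr 1
  rcases lt_trichotomy i j with h | rfl | h
  · have : ¬ j < i := not_lt.mpr h.le
    rw [if_neg this, if_pos h, hqinv i j]
    field_simp [hq0 i j]
  · simp [hq1 i]
  · rw [if_pos h, if_neg (not_lt.mpr h.le)]
    ring

private def rep (hq0 : ∀ i j, q i j ≠ 0) (hq1 : ∀ i, q i i = 1)
    (hqinv : ∀ i j, q j i = (q i j)⁻¹) :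
    QSA k N q →ₐ[k] Module.End k ((Fin N → ℕ) →₀ k) :=
  RingQuot.liftAlgHom k ⟨FreeAlgebra.lift k (fun i => Trep q i), by
    intro x y hxy
    cases hxy with
    | rel i j =>
      simp only [map_mul, map_smul, FreeAlgebra.lift_ι_apply]
      rw [Module.End.mul_eq_comp, Module.End.mul_eq_comp]
      exact Trep_rel q hq0 hq1 hqinv i j⟩

private lemma rep_X (hq0 : ∀ i j, q i j ≠ 0) (hq1 : ∀ i, q i i = 1)
    (hqinv : ∀ i j, q j i = (q i j)⁻¹) (i : Fin N) :
    rep q hq0 hq1 hqinv (X k N q i) = Trep q i := by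
  unfold rep X
  rw [RingQuot.liftAlgHom_mkAlgHom_apply, FreeAlgebra.lift_ι_apply]

private lemma xpow_ne_zero (hq0 : ∀ i j, q i j ≠ 0) (hq1 : ∀ i, q i i = 1)
    (hqinv : ∀ i j, q j i = (q i j)⁻¹) (α : Fin N → ℕ) :
    xpow k N q α ≠ 0 := by
  classical
  set φ := rep q hq0 hq1 hqinv with hφ
  have hgood : ∀ (L : List (Module.End k ((Fin N → ℕ) →₀ k))),
      (∀ g ∈ L, ∀ μ : Fin N → ℕ, ∃ c : k, c ≠ 0 ∧ ∃ μ',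
        g (Finsupp.single μ 1) = c • Finsupp.single μ' 1) →
      ∀ μ : Fin N → ℕ, ∃ c : k, c ≠ 0 ∧ ∃ μ',
        L.prod (Finsupp.single μ 1) = c • Finsupp.single μ' 1 := by
    intro L
    induction L with
    | nil => exact fun _ μ => ⟨1, one_ne_zero, μ, by simp⟩
    | cons g L ih =>
      intro hg μ
      obtain ⟨c, hc, μ', hμ'⟩ := ih (fun g' hg' => hg g' (List.mem_cons_of_mem _ hg')) μ
      obtain ⟨c2, hc2, μ'', hμ''⟩ := hg g (List.mem_cons_self) μ'
      refine ⟨c * c2, mul_ne_zero hc hc2, μ'', ?_⟩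
      rw [List.prod_cons, Module.End.mul_apply, hμ', map_smul, hμ'', smul_smul]
      -- done
  have hT : ∀ (i : Fin N) (μ : Fin N → ℕ), ∃ c : k, c ≠ 0 ∧ ∃ μ',
      Trep q i (Finsupp.single μ (1:k)) = c • Finsupp.single μ' 1 := by
    intro i μ
    refine ⟨_, ?_, nsucc μ i, Trep_single q i μ 1⟩
    exact Finset.prod_ne_zero_iff.mpr (fun s _ => pow_ne_zero _ (hq0 i s))
  have hTpow : ∀ (i : Fin N) (n : ℕ) (μ : Fin N → ℕ), ∃ c : k, c ≠ 0 ∧ ∃ μ',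
      (Trep q i ^ n) (Finsupp.single μ (1:k)) = c • Finsupp.single μ' 1 := by
    intro i n μ
    have := hgood (List.replicate n (Trep q i))
      (fun g hg μ' => by rw [List.eq_of_mem_replicate hg]; exact hT i μ') μ
    rwa [List.prod_replicate] at this
  intro h0
  have h1 : φ (xpow k N q α) = (List.ofFn fun i => (Trep q i) ^ (α i)).prod := by
    rw [xpow, map_list_prod, List.map_ofFn]
    exact congrArg List.prod (congrArg List.ofFn (funext fun i => by
      simp [Function.comp, map_pow, hφ, rep_X]))
  obtain ⟨c, hc, μ', hμ'⟩ := hgood (List.ofFn fun i => (Trep q i) ^ (α i))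
    (by
      intro g hg μ
      rw [List.mem_ofFn] at hg
      obtain ⟨i, rfl⟩ := hg
      exact hTpow i (α i) μ) (fun _ => 0)
  rw [← h1, h0, map_zero] at hμ'
  rcases smul_eq_zero.mp hμ'.symm with h | h
  · exact hc h
  · exact one_ne_zero (Finsupp.single_eq_zero.mp h)
end Rep



section Machinery
open Finset

variable {k : Type} [Field k] {N : ℕ} (q : Fin N → Fin N → k) (lam : Fin N → k)
  (γ : Fin N → ℤ)

private def sgn (S : Finset (Fin N)) (i : Fin N) : k :=
  (-1 : k) ^ (S.filter (fun s => s < i)).card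

private def alphaOf (S : Finset (Fin N)) : Fin N → ℕ :=
  fun s => (γ s + if s ∈ S then 1 else 0).toNat

private def eSb (S : Finset (Fin N)) : TwCochain k N q :=
  Finsupp.single S (xpow k N q (alphaOf γ S))

private def cconst (i : Fin N) : k :=
  (∏ s ∈ Finset.univ.filter (fun s => s ≤ i), q i s ^ γ s)
    - lam i * ∏ s ∈ Finset.univ.filter (fun s => i ≤ s), ((q i s)⁻¹) ^ γ s

private def AdmS (m : ℕ) : Finset (Finset (Fin N)) :=
  Finset.univ.filter (fun S => S.card = m ∧ ∀ i, γ i = -1 → i ∈ S)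

private lemma mem_AdmS {m : ℕ} {S : Finset (Fin N)} :
    S ∈ AdmS γ m ↔ S.card = m ∧ ∀ i, γ i = -1 → i ∈ S := by
  simp [AdmS]

variable {γ}

private lemma sgn_ne (S : Finset (Fin N)) (i : Fin N) : sgn (k := k) S i ≠ 0 := by
  simp [sgn]

private lemma sgn_sq (S : Finset (Fin N)) (i : Fin N) :
    sgn (k := k) S i * sgn S i = 1 := by
  rw [sgn, ← mul_pow]
  norm_num

private lemma sgn_swap (W : Finset (Fin N)) (a b : Fin N) (hab : a ≠ b)
    (ha : a ∉ W) (hb : b ∉ W) :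
    sgn (k := k) W b * sgn (insert b W) a = -(sgn W a * sgn (insert a W) b) := by
  have hfa : ∀ (c d : Fin N), c ∉ W → ((insert c W).filter (fun s => s < d)).card
      = (W.filter (fun s => s < d)).card + (if c < d then 1 else 0) := by
    intro c d hc
    rw [Finset.filter_insert]
    split_ifs with h
    · rw [Finset.card_insert_of_notMem (by simp [hc])]
    · rfl
  unfold sgn
  rw [hfa b a hb, hfa a b ha]
  rcases (Ne.lt_or_gt hab) with h | h
  · rw [if_neg (not_lt.mpr h.le), if_pos h, add_zero, pow_add]
    ring
  · rw [if_pos h, if_neg (not_lt.mpr h.le), add_zero, pow_add]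
    ring

private lemma alphaOf_cast_mem (hγ : ∀ i, -1 ≤ γ i) {S : Finset (Fin N)} {s : Fin N}
    (h : s ∈ S) : ((alphaOf γ S s : ℤ)) = γ s + 1 := by
  simp only [alphaOf, if_pos h]
  exact Int.toNat_of_nonneg (by linarith [hγ s])

private lemma alphaOf_cast_not_mem (hγ : ∀ i, -1 ≤ γ i) {S : Finset (Fin N)} {s : Fin N}
    (hadm : ∀ i, γ i = -1 → i ∈ S) (h : s ∉ S) : ((alphaOf γ S s : ℤ)) = γ s := by
  have h1 := hγ s
  have h2 : γ s ≠ -1 := fun hh => h (hadm s hh)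
  simp only [alphaOf, if_neg h]
  rw [add_zero]
  refine Int.toNat_of_nonneg ?_
  rcases lt_or_eq_of_le h1 with hlt | heq
  · omega
  · exact absurd heq.symm h2

private lemma nsucc_alphaOf (hγ : ∀ i, -1 ≤ γ i) {S : Finset (Fin N)} {i : Fin N}
    (hadm : ∀ j, γ j = -1 → j ∈ S) (hi : i ∉ S) :
    nsucc (alphaOf γ S) i = alphaOf γ (insert i S) := by
  funext j
  rcases eq_or_ne j i with rfl | hj
  · have h1 := hγ j
    have h2 : γ j ≠ -1 := fun hh => hi (hadm j hh)
    simp only [nsucc, alphaOf, if_pos (Finset.mem_insert_self j S), if_neg hi, if_pos rfl, if_true]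
    omega
  · simp only [nsucc, alphaOf, if_neg hj, add_zero]
    congr 2
    simp [Finset.mem_insert, hj]

private lemma dtw_single (S : Finset (Fin N)) (a : QSA k N q) :
    dtw k N q lam (Finsupp.single S a)
      = ∑ i ∈ Sᶜ, Finsupp.single (insert i S)
          (((-1 : k) ^ (S.filter (fun s => s < i)).card) •
            ((∏ s ∈ S.filter (fun s => s ≤ i), q s i) • (X k N q i * a)
              - (lam i * ∏ s ∈ S.filter (fun s => i ≤ s), q i s) • (a * X k N q i))) := by
  unfold dtw
  rw [Finsupp.lsum_single, LinearMap.sum_apply]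
  refine Finset.sum_congr rfl (fun i _ => ?_)
  rw [LinearMap.comp_apply, LinearMap.smul_apply, LinearMap.sub_apply,
    LinearMap.smul_apply, LinearMap.smul_apply, LinearMap.mulLeft_apply,
    LinearMap.mulRight_apply, Finsupp.lsingle_apply]

private lemma dtw_eS (hq0 : ∀ i j, q i j ≠ 0) (hq1 : ∀ i, q i i = 1)
    (hqinv : ∀ i j, q j i = (q i j)⁻¹) (hγ : ∀ i, -1 ≤ γ i)
    {S : Finset (Fin N)} (hadm : ∀ j, γ j = -1 → j ∈ S) :
    dtw k N q lam (eSb q γ S)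
      = ∑ i ∈ Sᶜ, (sgn S i * cconst q lam γ i) • eSb q γ (insert i S) := by
  rw [eSb, dtw_single]
  refine Finset.sum_congr rfl (fun i hi => ?_)
  have hiS : i ∉ S := by simpa using hi
  have hins : nsucc (alphaOf γ S) i = alphaOf γ (insert i S) :=
    nsucc_alphaOf hγ hadm hiS
  -- identity (I)
  have hterm1 : ∀ s : Fin N,
      (if s ∈ S then q s i else 1) * q i s ^ alphaOf γ S s = q i s ^ γ s := by
    intro s
    rcases Classical.em (s ∈ S) with h | h
    · rw [if_pos h, ← zpow_natCast (q i s), alphaOf_cast_mem hγ h,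
        zpow_add_one₀ (hq0 i s), hqinv i s, mul_comm ((q i s)⁻¹), mul_assoc,
        mul_inv_cancel₀ (hq0 i s), mul_one]
    · rw [if_neg h, one_mul, ← zpow_natCast (q i s), alphaOf_cast_not_mem hγ hadm h]
  have hterm2 : ∀ s : Fin N,
      (if s ∈ S then q i s else 1) * q s i ^ alphaOf γ S s = ((q i s)⁻¹) ^ γ s := by
    intro s
    rcases Classical.em (s ∈ S) with h | h
    · rw [if_pos h, hqinv i s, ← zpow_natCast ((q i s)⁻¹), alphaOf_cast_mem hγ h,
        zpow_add_one₀ (inv_ne_zero (hq0 i s)), mul_comm (q i s), mul_assoc,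
        inv_mul_cancel₀ (hq0 i s), mul_one]
    · rw [if_neg h, one_mul, hqinv i s, ← zpow_natCast ((q i s)⁻¹),
        alphaOf_cast_not_mem hγ hadm h]
  have hsplit : (∏ j, q i j ^ alphaOf γ S j)
      = (∏ j ∈ univ.filter (fun j => j ≤ i), q i j ^ alphaOf γ S j) *
          ∏ j ∈ univ.filter (fun j => i < j), q i j ^ alphaOf γ S j := by
    rw [← Finset.prod_filter_mul_prod_filter_not univ (fun j => j ≤ i)]
    congr 1
    apply Finset.prod_congr _ (fun _ _ => rfl)
    apply Finset.filter_congr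
    intro j _
    simp [not_le]
  have hcancel : (∏ j ∈ univ.filter (fun j => i < j), q i j ^ alphaOf γ S j) *
      (∏ j ∈ univ.filter (fun j => i < j), q j i ^ alphaOf γ S j) = 1 := by
    rw [← Finset.prod_mul_distrib]
    apply Finset.prod_eq_one
    intro j _
    rw [← mul_pow, hqinv i j, mul_inv_cancel₀ (hq0 i j), one_pow]
  have hP0 : (∏ s ∈ S.filter (fun s => s ≤ i), q s i)
      = ∏ s ∈ univ.filter (fun s => s ≤ i), (if s ∈ S then q s i else 1) := by
    rw [← Finset.prod_filter]
    congr 1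
    ext s
    simp [Finset.mem_filter, and_comm]
  have hQ0 : (∏ s ∈ S.filter (fun s => i ≤ s), q i s)
      = ∏ s ∈ univ.filter (fun s => i ≤ s), (if s ∈ S then q i s else 1) := by
    rw [← Finset.prod_filter]
    congr 1
    ext s
    simp [Finset.mem_filter, and_comm]
  have hfilterle : univ.filter (fun s : Fin N => i ≤ s)
      = insert i (univ.filter (fun s => i < s)) := by
    ext s
    simp only [Finset.mem_filter, Finset.mem_insert, Finset.mem_univ, true_and]
    constructor
    · intro h
      exact (eq_or_lt_of_le h).imp Eq.symm id
    · rintro (rfl | h)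
      · exact le_refl _
      · exact h.le
  have hext : (∏ j ∈ univ.filter (fun j => i < j), q j i ^ alphaOf γ S j)
      = ∏ j ∈ univ.filter (fun j => i ≤ j), q j i ^ alphaOf γ S j := by
    rw [hfilterle, Finset.prod_insert (by simp), hqinv i i, hq1 i, inv_one, one_pow, one_mul]
  have hI : (∏ s ∈ S.filter (fun s => s ≤ i), q s i) *
      ((∏ j, q i j ^ alphaOf γ S j) *
        ∏ j ∈ univ.filter (fun j => i < j), q j i ^ alphaOf γ S j)
      = ∏ s ∈ univ.filter (fun s => s ≤ i), q i s ^ γ s := by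
    calc (∏ s ∈ S.filter (fun s => s ≤ i), q s i) *
        ((∏ j, q i j ^ alphaOf γ S j) *
          ∏ j ∈ univ.filter (fun j => i < j), q j i ^ alphaOf γ S j)
        = ((∏ s ∈ univ.filter (fun s => s ≤ i), (if s ∈ S then q s i else 1)) *
            ∏ j ∈ univ.filter (fun j => j ≤ i), q i j ^ alphaOf γ S j) *
          ((∏ j ∈ univ.filter (fun j => i < j), q i j ^ alphaOf γ S j) *
            ∏ j ∈ univ.filter (fun j => i < j), q j i ^ alphaOf γ S j) := by
          rw [hsplit, hP0]; ring
      _ = ∏ s ∈ univ.filter (fun s => s ≤ i),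
            ((if s ∈ S then q s i else 1) * q i s ^ alphaOf γ S s) := by
          rw [hcancel, mul_one, ← Finset.prod_mul_distrib]
      _ = ∏ s ∈ univ.filter (fun s => s ≤ i), q i s ^ γ s :=
          Finset.prod_congr rfl (fun s _ => hterm1 s)
  have hII : (∏ s ∈ S.filter (fun s => i ≤ s), q i s) *
      (∏ j ∈ univ.filter (fun j => i < j), q j i ^ alphaOf γ S j)
      = ∏ s ∈ univ.filter (fun s => i ≤ s), ((q i s)⁻¹) ^ γ s := by
    rw [hext, hQ0, ← Finset.prod_mul_distrib]
    exact Finset.prod_congr rfl (fun s _ => hterm2 s)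
  rw [X_mul_xpow, xpow_mul_X, hins, smul_smul, smul_smul, ← sub_smul, smul_smul,
    ← Finsupp.smul_single]
  show _ = (sgn S i * cconst q lam γ i) • Finsupp.single (insert i S)
    (xpow k N q (alphaOf γ (insert i S)))
  congr 1
  rw [sgn, cconst]
  congr 1
  rw [← hI, ← hII]
  ring

private lemma cconst_factor (hq0 : ∀ i j, q i j ≠ 0) (hq1 : ∀ i, q i i = 1)
    (i : Fin N) :
    cconst q lam γ i
      = (∏ s ∈ univ.filter (fun s => i ≤ s), ((q i s)⁻¹) ^ γ s) *
          ((∏ s, q i s ^ γ s) - lam i) := by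
  have hfilterle : univ.filter (fun s : Fin N => i ≤ s)
      = insert i (univ.filter (fun s => i < s)) := by
    ext s
    simp only [Finset.mem_filter, Finset.mem_insert, Finset.mem_univ, true_and]
    constructor
    · intro h
      exact (eq_or_lt_of_le h).imp Eq.symm id
    · rintro (rfl | h)
      · exact le_refl _
      · exact h.le
  have hB : (∏ s ∈ univ.filter (fun s => i ≤ s), ((q i s)⁻¹) ^ γ s)
      = ∏ s ∈ univ.filter (fun s => i < s), ((q i s)⁻¹) ^ γ s := by
    rw [hfilterle, Finset.prod_insert (by simp), hq1 i, inv_one, one_zpow, one_mul]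
  have hsplitz : (∏ s, q i s ^ γ s)
      = (∏ s ∈ univ.filter (fun s => s ≤ i), q i s ^ γ s) *
          ∏ s ∈ univ.filter (fun s => i < s), q i s ^ γ s := by
    rw [← Finset.prod_filter_mul_prod_filter_not univ (fun s => s ≤ i)]
    congr 1
    apply Finset.prod_congr _ (fun _ _ => rfl)
    apply Finset.filter_congr
    intro j _
    simp [not_le]
  have hcz : (∏ s ∈ univ.filter (fun s => i < s), ((q i s)⁻¹) ^ γ s) *
      (∏ s ∈ univ.filter (fun s => i < s), q i s ^ γ s) = 1 := by
    rw [← Finset.prod_mul_distrib]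
    apply Finset.prod_eq_one
    intro s _
    rw [← mul_zpow, inv_mul_cancel₀ (hq0 i s), one_zpow]
  rw [cconst, mul_sub, hsplitz, hB]
  have : (∏ s ∈ univ.filter (fun s => i < s), ((q i s)⁻¹) ^ γ s) *
      ((∏ s ∈ univ.filter (fun s => s ≤ i), q i s ^ γ s) *
        ∏ s ∈ univ.filter (fun s => i < s), q i s ^ γ s)
      = ∏ s ∈ univ.filter (fun s => s ≤ i), q i s ^ γ s := by
    calc _ = ((∏ s ∈ univ.filter (fun s => i < s), ((q i s)⁻¹) ^ γ s) *
          ∏ s ∈ univ.filter (fun s => i < s), q i s ^ γ s) *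
            ∏ s ∈ univ.filter (fun s => s ≤ i), q i s ^ γ s := by ring
      _ = _ := by rw [hcz, one_mul]
  rw [this]
  ring

private lemma cconst_ne (hq0 : ∀ i j, q i j ≠ 0) (hq1 : ∀ i, q i i = 1)
    (i : Fin N) (hu : (∏ s, q i s ^ γ s) ≠ lam i) :
    cconst q lam γ i ≠ 0 := by
  rw [cconst_factor q lam hq0 hq1 i]
  exact mul_ne_zero
    (Finset.prod_ne_zero_iff.mpr (fun s _ => zpow_ne_zero _ (inv_ne_zero (hq0 i s))))
    (sub_ne_zero.mpr hu)

end Machinery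
section Assembly
open Finset

variable {k : Type} [Field k] {N : ℕ} (q : Fin N → Fin N → k) (lam : Fin N → k)
  {γ : Fin N → ℤ}

private lemma scalar_helper (a b a' b' x y z : k) (ha : a * a = 1) (ha' : a' * a' = 1)
    (hsw : b * a' = -(a * b')) :
    ((a * x)⁻¹ * y) * (b * z) = -(a' * x)⁻¹ * (y * (b' * z)) := by
  have key : a * b = -(a' * b') := by
    linear_combination (a * a') * hsw - (a * b) * ha' - (a' * b') * ha
  have hai : a⁻¹ = a := inv_eq_of_mul_eq_one_right ha
  have ha'i : a'⁻¹ = a' := inv_eq_of_mul_eq_one_right ha'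
  rw [mul_inv, mul_inv, hai, ha'i]
  linear_combination (x⁻¹ * y * z) * key

private lemma Kspan_eq (hq0 : ∀ i j, q i j ≠ 0) (hq1 : ∀ i, q i i = 1)
    (hqinv : ∀ i j, q j i = (q i j)⁻¹) (hγ : ∀ i, -1 ≤ γ i) (m : ℕ) :
    KspanM k N q γ m = Submodule.span k ((fun S => eSb q γ S) '' ↑(AdmS γ m)) := by
  unfold KspanM
  congr 1
  ext f
  constructor
  · rintro ⟨α, S, hcard, hab, rfl⟩
    have hpt : ∀ s, (α s : ℤ) - (if s ∈ S then 1 else 0) = γ s := by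
      intro s
      have h := congrFun hab s
      simpa [betaZ] using h
    have hadm : ∀ i, γ i = -1 → i ∈ S := by
      intro i hgi
      by_contra hiS
      have h := hpt i
      rw [if_neg hiS] at h
      omega
    have hα : α = alphaOf γ S := by
      funext s
      have h := hpt s
      rcases Classical.em (s ∈ S) with hs | hs
      · rw [if_pos hs] at h
        simp only [alphaOf, if_pos hs]
        omega
      · rw [if_neg hs] at h
        simp only [alphaOf, if_neg hs]
        omega
    exact ⟨S, by simp only [Finset.mem_coe, mem_AdmS]; exact ⟨hcard, hadm⟩,
      by rw [hα]; rfl⟩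
  · rintro ⟨S, hS, rfl⟩
    rw [Finset.mem_coe, mem_AdmS] at hS
    refine ⟨alphaOf γ S, S, hS.1, ?_, rfl⟩
    funext s
    simp only [Pi.sub_apply, betaZ]
    rcases Classical.em (s ∈ S) with h | h
    · rw [if_pos h, alphaOf_cast_mem hγ h]; ring
    · rw [if_neg h, alphaOf_cast_not_mem hγ hS.2 h]; ring

private lemma exists_coeffs (hq0 : ∀ i j, q i j ≠ 0) (hq1 : ∀ i, q i i = 1)
    (hqinv : ∀ i j, q j i = (q i j)⁻¹) (hγ : ∀ i, -1 ≤ γ i) (m : ℕ)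
    (f : TwCochain k N q) (hf : f ∈ KspanM k N q γ m) :
    ∃ t : Finset (Fin N) → k, f = ∑ S ∈ AdmS γ m, t S • eSb q γ S := by
  rw [Kspan_eq q hq0 hq1 hqinv hγ m, ← Finset.coe_image] at hf
  obtain ⟨g, -, hg⟩ := Submodule.mem_span_finset.mp hf
  refine ⟨fun S => g (eSb q γ S), ?_⟩
  rw [← hg]
  rw [Finset.sum_image ?_]
  intro S hS T hT hET
  by_contra hne
  unfold eSb at hET
  rcases (Finsupp.single_eq_single_iff _ _ _ _).mp hET with ⟨h1, _⟩ | ⟨h1, _⟩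
  · exact hne h1
  · exact xpow_ne_zero q hq0 hq1 hqinv _ h1

private lemma double_reduce (F : Finset (Finset (Fin N))) (a : Finset (Fin N) → Fin N → k)
    (U : Finset (Fin N)) :
    (∑ S ∈ F, ∑ i ∈ Sᶜ, if insert i S = U then a S i else 0)
      = ∑ i : Fin N, if U.erase i ∈ F ∧ i ∈ U then a (U.erase i) i else 0 := by
  have h1 : ∀ S ∈ F, (∑ i ∈ Sᶜ, if insert i S = U then a S i else 0)
      = ∑ i : Fin N, if i ∉ S ∧ insert i S = U then a S i else 0 := by
    intro S _
    rw [← Finset.univ_inter Sᶜ, ← Finset.sum_ite_mem]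
    apply Finset.sum_congr rfl
    intro i _
    by_cases h1 : i ∈ S <;> by_cases h2 : insert i S = U <;>
      simp [h1, h2, Finset.mem_compl]
  rw [Finset.sum_congr rfl h1, Finset.sum_comm]
  apply Finset.sum_congr rfl
  intro i _
  rcases Classical.em (i ∈ U) with hiU | hiU
  · rcases Classical.em (U.erase i ∈ F) with hF | hF
    · rw [Finset.sum_eq_single_of_mem (U.erase i) hF ?_]
      · rw [if_pos ⟨Finset.notMem_erase i U, Finset.insert_erase hiU⟩, if_pos ⟨hF, hiU⟩]
      · intro S hS hne
        apply if_neg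
        rintro ⟨hiS, hins⟩
        exact hne (by rw [← hins, Finset.erase_insert hiS])
    · rw [if_neg (fun hc => hF hc.1)]
      apply Finset.sum_eq_zero
      intro S hS
      apply if_neg
      rintro ⟨hiS, hins⟩
      apply hF
      rw [← hins, Finset.erase_insert hiS]
      exact hS
  · rw [if_neg (fun hc => hiU hc.2)]
    apply Finset.sum_eq_zero
    intro S hS
    apply if_neg
    rintro ⟨hiS, hins⟩
    exact hiU (hins ▸ Finset.mem_insert_self i S)

private lemma comb_apply (F : Finset (Finset (Fin N))) (t : Finset (Fin N) → k)
    (U : Finset (Fin N)) :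
    (∑ S ∈ F, t S • eSb q γ S) U
      = (if U ∈ F then t U else 0) • xpow k N q (alphaOf γ U) := by
  rw [Finset.sum_apply']
  have h : ∀ S ∈ F, (t S • eSb q γ S) U
      = (if S = U then t S else 0) • xpow k N q (alphaOf γ U) := by
    intro S _
    rw [eSb, Finsupp.smul_apply, Finsupp.single_apply]
    by_cases h : S = U
    · rw [if_pos h, if_pos h, h]
    · rw [if_neg h, if_neg h, smul_zero, zero_smul]
  rw [Finset.sum_congr rfl h, ← Finset.sum_smul]
  congr 1
  rw [Finset.sum_ite_eq' F U t]

private def Rcoef (t : Finset (Fin N) → k) (m : ℕ) (U : Finset (Fin N)) : k :=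
  ∑ i : Fin N, if U.erase i ∈ AdmS γ m ∧ i ∈ U
    then t (U.erase i) * (sgn (U.erase i) i * cconst q lam γ i) else 0

private lemma dtw_comb_apply (hq0 : ∀ i j, q i j ≠ 0) (hq1 : ∀ i, q i i = 1)
    (hqinv : ∀ i j, q j i = (q i j)⁻¹) (hγ : ∀ i, -1 ≤ γ i) (m : ℕ)
    (t : Finset (Fin N) → k) (U : Finset (Fin N)) :
    (dtw k N q lam (∑ S ∈ AdmS γ m, t S • eSb q γ S)) U
      = Rcoef q lam (γ := γ) t m U • xpow k N q (alphaOf γ U) := by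
  rw [map_sum]
  have h1 : ∀ S ∈ AdmS γ m, dtw k N q lam (t S • eSb q γ S)
      = ∑ i ∈ Sᶜ, (t S * (sgn S i * cconst q lam γ i)) • eSb q γ (insert i S) := by
    intro S hS
    rw [map_smul, dtw_eS q lam hq0 hq1 hqinv hγ ((mem_AdmS γ).mp hS).2, Finset.smul_sum]
    exact Finset.sum_congr rfl (fun i _ => by rw [smul_smul])
  rw [Finset.sum_congr rfl h1, Finset.sum_apply']
  have h2 : ∀ S ∈ AdmS γ m,
      (∑ i ∈ Sᶜ, (t S * (sgn S i * cconst q lam γ i)) • eSb q γ (insert i S)) U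
        = ∑ i ∈ Sᶜ, (if insert i S = U then t S * (sgn S i * cconst q lam γ i) else 0) •
            xpow k N q (alphaOf γ U) := by
    intro S _
    rw [Finset.sum_apply']
    apply Finset.sum_congr rfl
    intro i _
    rw [eSb, Finsupp.smul_apply, Finsupp.single_apply]
    by_cases h : insert i S = U
    · rw [if_pos h, if_pos h, h]
    · rw [if_neg h, if_neg h, smul_zero, zero_smul]
  rw [Finset.sum_congr rfl h2]
  have h3 : (∑ S ∈ AdmS γ m, ∑ i ∈ Sᶜ,
      (if insert i S = U then t S * (sgn S i * cconst q lam γ i) else 0) •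
        xpow k N q (alphaOf γ U))
      = (∑ S ∈ AdmS γ m, ∑ i ∈ Sᶜ,
          if insert i S = U then t S * (sgn S i * cconst q lam γ i) else 0) •
            xpow k N q (alphaOf γ U) := by
    rw [Finset.sum_smul]
    exact Finset.sum_congr rfl (fun S _ => by rw [Finset.sum_smul])
  rw [h3, double_reduce]
  rfl

end Assembly
/-- Lemma 4.5 of the paper: if `γ ∈ (ℕ ∪ {-1})^N` does not belong to `C_g`, then the
subcomplex `K_{g,γ}^•` of the twisted complex is acyclic, i.e. its cohomology vanishes
in every degree `m ≥ 0`. -/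
theorem stmt10 (k : Type) [Field k] [CharZero k] (N : ℕ) (hN : 0 < N)
    (q : Fin N → Fin N → k) (hq0 : ∀ i j, q i j ≠ 0) (hq1 : ∀ i, q i i = 1)
    (hqinv : ∀ i j, q j i = (q i j)⁻¹)
    (lam : Fin N → k) (hlam : ∀ i, lam i ≠ 0)
    (γ : Fin N → ℤ) (hγ : ∀ i, -1 ≤ γ i) (hγC : γ ∉ Cg k N q lam) :
    -- vanishing of cohomology in degree 0:
    (∀ f ∈ KspanM k N q γ 0, dtw k N q lam f = 0 → f = 0) ∧
    -- vanishing of cohomology in every degree `m + 1 ≥ 1`: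
    (∀ (m : ℕ), ∀ f ∈ KspanM k N q γ (m + 1), dtw k N q lam f = 0 →
      ∃ h ∈ KspanM k N q γ m, dtw k N q lam h = f) := by
  classical
  have hex : ∃ i, (∏ s, q i s ^ γ s) ≠ lam i ∧ γ i ≠ -1 := by
    by_contra hc
    push_neg at hc
    apply hγC
    intro i
    rcases Classical.em ((∏ s, q i s ^ γ s) = lam i) with h | h
    · exact Or.inl h
    · exact Or.inr (hc i h)
  obtain ⟨i₀, hu, hγ0⟩ := hex
  have hcne : cconst q lam γ i₀ ≠ 0 := cconst_ne q lam hq0 hq1 i₀ hu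
  have hsgnc_ne : ∀ T : Finset (Fin N), sgn (k := k) T i₀ * cconst q lam γ i₀ ≠ 0 :=
    fun T => mul_ne_zero (sgn_ne _ _) hcne
  have hAins : ∀ (m : ℕ) (T : Finset (Fin N)), i₀ ∉ T →
      (insert i₀ T ∈ AdmS γ (m+1) ↔ T ∈ AdmS γ m) := by
    intro m T hT
    rw [mem_AdmS, mem_AdmS]
    constructor
    · rintro ⟨hc, ha⟩
      refine ⟨?_, fun i hi => ?_⟩
      · rw [Finset.card_insert_of_notMem hT] at hc
        omega
      · rcases Finset.mem_insert.mp (ha i hi) with h | h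
        · exact absurd (h ▸ hi) hγ0
        · exact h
    · rintro ⟨hc, ha⟩
      exact ⟨by rw [Finset.card_insert_of_notMem hT, hc],
        fun i hi => Finset.mem_insert_of_mem (ha i hi)⟩
  constructor
  · -- degree 0
    intro f hf hdf
    obtain ⟨t, rfl⟩ := exists_coeffs q hq0 hq1 hqinv hγ 0 f hf
    have hR : ∀ U, Rcoef q lam (γ := γ) t 0 U = 0 := by
      intro U
      have h0 : (dtw k N q lam (∑ S ∈ AdmS γ 0, t S • eSb q γ S)) U = 0 := by
        rw [hdf]; simp
      rw [dtw_comb_apply q lam hq0 hq1 hqinv hγ 0 t U] at h0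
      rcases smul_eq_zero.mp h0 with h | h
      · exact h
      · exact absurd h (xpow_ne_zero q hq0 hq1 hqinv _)
    apply Finset.sum_eq_zero
    intro S hS
    have hS0 : S = ∅ := Finset.card_eq_zero.mp ((mem_AdmS γ).mp hS).1
    subst hS0
    have h5 := hR {i₀}
    unfold Rcoef at h5
    have hside1 : ∀ b ∈ (Finset.univ : Finset (Fin N)), b ≠ i₀ →
        (if ({i₀} : Finset (Fin N)).erase b ∈ AdmS γ 0 ∧ b ∈ ({i₀} : Finset (Fin N))
          then t (({i₀} : Finset (Fin N)).erase b) *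
            (sgn (({i₀} : Finset (Fin N)).erase b) b * cconst q lam γ b) else 0) = 0 := by
      intro b _ hb
      apply if_neg
      rintro ⟨_, hbmem⟩
      exact hb (Finset.mem_singleton.mp hbmem)
    rw [Finset.sum_eq_single i₀ hside1
      (fun hmem => absurd (Finset.mem_univ i₀) hmem)] at h5
    rw [Finset.erase_singleton, if_pos ⟨hS, Finset.mem_singleton_self i₀⟩] at h5
    rcases mul_eq_zero.mp h5 with h | h
    · rw [h, zero_smul]
    · exact absurd h (hsgnc_ne ∅)
  · -- degree m + 1
    intro m f hf hdf
    obtain ⟨t, rfl⟩ := exists_coeffs q hq0 hq1 hqinv hγ (m+1) f hf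
    have hR : ∀ U, Rcoef q lam (γ := γ) t (m+1) U = 0 := by
      intro U
      have h0 : (dtw k N q lam (∑ S ∈ AdmS γ (m+1), t S • eSb q γ S)) U = 0 := by
        rw [hdf]; simp
      rw [dtw_comb_apply q lam hq0 hq1 hqinv hγ (m+1) t U] at h0
      rcases smul_eq_zero.mp h0 with h | h
      · exact h
      · exact absurd h (xpow_ne_zero q hq0 hq1 hqinv _)
    set u : Finset (Fin N) → k := fun T =>
      if i₀ ∈ T then 0 else (sgn T i₀ * cconst q lam γ i₀)⁻¹ * t (insert i₀ T) with hu
    refine ⟨∑ T ∈ AdmS γ m, u T • eSb q γ T, ?_, ?_⟩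
    · rw [Kspan_eq q hq0 hq1 hqinv hγ m]
      exact Submodule.sum_mem _ (fun T hT => Submodule.smul_mem _ _
        (Submodule.subset_span ⟨T, Finset.mem_coe.mpr hT, rfl⟩))
    · ext U
      rw [dtw_comb_apply q lam hq0 hq1 hqinv hγ m u U,
        comb_apply q (F := AdmS γ (m+1)) t U]
      congr 1
      unfold Rcoef
      rcases Classical.em (i₀ ∈ U) with hiU | hiU
      · -- i₀ ∈ U : only the i = i₀ term survives
        have hside1 : ∀ b ∈ (Finset.univ : Finset (Fin N)), b ≠ i₀ →
            (if U.erase b ∈ AdmS γ m ∧ b ∈ U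
              then u (U.erase b) * (sgn (U.erase b) b * cconst q lam γ b) else 0) = 0 := by
          intro b _ hb
          by_cases hcnd : U.erase b ∈ AdmS γ m ∧ b ∈ U
          · rw [if_pos hcnd]
            simp only [hu]
            rw [if_pos (Finset.mem_erase.mpr ⟨Ne.symm hb, hiU⟩), zero_mul]
          · rw [if_neg hcnd]
        rw [Finset.sum_eq_single i₀ hside1
          (fun hmem => absurd (Finset.mem_univ i₀) hmem)]
        have hiff : U.erase i₀ ∈ AdmS γ m ↔ U ∈ AdmS γ (m+1) := by
          have h := hAins m (U.erase i₀) (Finset.notMem_erase i₀ U)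
          rw [Finset.insert_erase hiU] at h
          exact h.symm
        by_cases hUA : U ∈ AdmS γ (m+1)
        · rw [if_pos ⟨hiff.mpr hUA, hiU⟩, if_pos hUA]
          simp only [hu]
          rw [if_neg (Finset.notMem_erase i₀ U), Finset.insert_erase hiU]
          rw [mul_comm (sgn (U.erase i₀) i₀ * cconst q lam γ i₀)⁻¹ (t U), mul_assoc,
            inv_mul_cancel₀ (hsgnc_ne _), mul_one]
        · rw [if_neg hUA, if_neg (fun hc => hUA (hiff.mp hc.1))]
      · -- i₀ ∉ U : use the cocycle relation at insert i₀ U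
        have hR' := hR (insert i₀ U)
        unfold Rcoef at hR'
        rw [← Finset.add_sum_erase _ _ (Finset.mem_univ i₀)] at hR'
        have hterm0 : (if (insert i₀ U).erase i₀ ∈ AdmS γ (m+1) ∧ i₀ ∈ insert i₀ U
            then t ((insert i₀ U).erase i₀) *
              (sgn ((insert i₀ U).erase i₀) i₀ * cconst q lam γ i₀) else 0)
            = (if U ∈ AdmS γ (m+1) then t U else 0) *
                (sgn U i₀ * cconst q lam γ i₀) := by
          rw [Finset.erase_insert hiU]
          by_cases hUA : U ∈ AdmS γ (m+1)
          · rw [if_pos ⟨hUA, Finset.mem_insert_self i₀ U⟩, if_pos hUA]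
          · rw [if_neg (fun hc => hUA hc.1), if_neg hUA, zero_mul]
        rw [hterm0] at hR'
        rw [← Finset.add_sum_erase _ _ (Finset.mem_univ i₀)]
        rw [if_neg (fun hc => hiU hc.2), zero_add]
        have hper : ∀ i ∈ (Finset.univ : Finset (Fin N)).erase i₀,
            (if U.erase i ∈ AdmS γ m ∧ i ∈ U
              then u (U.erase i) * (sgn (U.erase i) i * cconst q lam γ i) else 0)
            = -(sgn U i₀ * cconst q lam γ i₀)⁻¹ *
              (if (insert i₀ U).erase i ∈ AdmS γ (m+1) ∧ i ∈ insert i₀ U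
                then t ((insert i₀ U).erase i) *
                  (sgn ((insert i₀ U).erase i) i * cconst q lam γ i) else 0) := by
          intro i hi
          have hii0 : i ≠ i₀ := (Finset.mem_erase.mp hi).1
          have hi0e : i₀ ∉ U.erase i := fun hmem => hiU (Finset.mem_of_mem_erase hmem)
          have heic : (insert i₀ U).erase i = insert i₀ (U.erase i) := by
            ext x
            simp only [Finset.mem_erase, Finset.mem_insert]
            constructor
            · rintro ⟨hx, (rfl | hxU)⟩
              · exact Or.inl rfl
              · exact Or.inr ⟨hx, hxU⟩
            · rintro (rfl | ⟨hx, hxU⟩)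
              · exact ⟨Ne.symm hii0, Or.inl rfl⟩
              · exact ⟨hx, Or.inr hxU⟩
          by_cases hcnd : U.erase i ∈ AdmS γ m ∧ i ∈ U
          · have hcnd2 : (insert i₀ U).erase i ∈ AdmS γ (m+1) ∧ i ∈ insert i₀ U := by
              rw [heic]
              exact ⟨(hAins m (U.erase i) hi0e).mpr hcnd.1,
                Finset.mem_insert_of_mem hcnd.2⟩
            rw [if_pos hcnd, if_pos hcnd2, heic]
            simp only [hu]
            rw [if_neg hi0e]
            have hU : insert i (U.erase i) = U := Finset.insert_erase hcnd.2
            have hsw := sgn_swap (k := k) (U.erase i) i₀ i (Ne.symm hii0) hi0e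
              (Finset.notMem_erase i U)
            have hkey := scalar_helper (sgn (U.erase i) i₀) (sgn (U.erase i) i)
              (sgn (insert i (U.erase i)) i₀) (sgn (insert i₀ (U.erase i)) i)
              (cconst q lam γ i₀) (t (insert i₀ (U.erase i))) (cconst q lam γ i)
              (sgn_sq _ _) (sgn_sq _ _) hsw
            rw [hU] at hkey
            exact hkey
          · rw [if_neg hcnd, if_neg ?_]
            · rw [mul_zero]
            · rintro ⟨hc1, hc2⟩
              apply hcnd
              rw [heic] at hc1
              refine ⟨(hAins m (U.erase i) hi0e).mp hc1, ?_⟩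
              rcases Finset.mem_insert.mp hc2 with h | h
              · exact absurd h hii0
              · exact h
        rw [Finset.sum_congr rfl hper, ← Finset.mul_sum]
        have hSm : (∑ i ∈ (Finset.univ : Finset (Fin N)).erase i₀,
            (if (insert i₀ U).erase i ∈ AdmS γ (m+1) ∧ i ∈ insert i₀ U
              then t ((insert i₀ U).erase i) *
                (sgn ((insert i₀ U).erase i) i * cconst q lam γ i) else 0))
            = -((if U ∈ AdmS γ (m+1) then t U else 0) *
                (sgn U i₀ * cconst q lam γ i₀)) := by
          linear_combination hR'
        rw [hSm, neg_mul_neg,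
          mul_comm (if U ∈ AdmS γ (m+1) then t U else 0) (sgn U i₀ * cconst q lam γ i₀),
          ← mul_assoc, inv_mul_cancel₀ (hsgnc_ne U), one_mul]
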